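/- Let A, B be continuous T-periodic matrix functions and α a continuous T-periodic scalar function with α(t) > 0. If P is a continuously differentiable T-periodic symmetric-matrix-valued solution of P'(t) = A(t)P(t) + P(t)A(t)ᵀ + α(t)P(t) + (1/α(t))B(t)B(t)ᵀ, then for all t, P(t) ⪰ 0 provided P(t₀) ⪰ 0 for some t₀; moreover if P̃ is any continuously differentiable T-periodic symmetric solution of the differential inequality P̃'(t) ⪰ A(t)P̃(t) + P̃(t)A(t)ᵀ + α(t)P̃(t) + (1/α(t))B(t)B(t)ᵀ with P̃(t₀) ⪰ P(t₀), then P̃(t) ⪰ P(t) for all t ≥ t₀. -/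

import Mathlib

open Matrix Set

lemma quad_bound {n : ℕ} (N : Matrix (Fin n) (Fin n) ℝ) (x : Fin n → ℝ)
    (c : ℝ) (hc : 0 ≤ c) (hentry : ∀ i j, |N i j| ≤ c) :
    x ⬝ᵥ (N *ᵥ x) ≤ ((n : ℝ) * c) * (x ⬝ᵥ x) := by
  calc x ⬝ᵥ (N *ᵥ x) = ∑ i, ∑ j, x i * (N i j * x j) := by
        simp [dotProduct, mulVec, Finset.mul_sum]
    _ ≤ ∑ i, ∑ j, c * (((x i)^2 + (x j)^2)/2) := by
        refine Finset.sum_le_sum fun i _ => Finset.sum_le_sum fun j _ => ?_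
        have h1 : x i * (N i j * x j) ≤ |x i * (N i j * x j)| := le_abs_self _
        have h2 : |x i * (N i j * x j)| = |N i j| * (|x i| * |x j|) := by
          rw [abs_mul, abs_mul]; ring
        have h3 : |x i| * |x j| ≤ ((x i)^2 + (x j)^2)/2 := by
          nlinarith [sq_nonneg (|x i| - |x j|), sq_abs (x i), sq_abs (x j)]
        calc x i * (N i j * x j) ≤ |N i j| * (|x i| * |x j|) := by rw [← h2]; exact h1
          _ ≤ c * (((x i)^2 + (x j)^2)/2) := by
              apply mul_le_mul (hentry i j) h3 (by positivity) hc
    _ = ((n : ℝ) * c) * (x ⬝ᵥ x) := by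
        simp only [dotProduct, ← sq]
        have : ∑ i : Fin n, ∑ j : Fin n, ((x i)^2 + (x j)^2)
            = 2 * ((n:ℝ) * ∑ i, (x i)^2) := by
          simp [Finset.sum_add_distrib, Finset.mul_sum, Finset.card_univ]
          rw [← Finset.sum_add_distrib]
          exact Finset.sum_congr rfl fun i _ => by ring
        have e2 : ∑ i : Fin n, ∑ j : Fin n, c * ((x i ^ 2 + x j ^ 2) / 2)
            = c * ((∑ i : Fin n, ∑ j : Fin n, (x i ^ 2 + x j ^ 2)) / 2) := by
          simp [Finset.mul_sum, Finset.sum_div, mul_div_assoc]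
        rw [e2, this]; ring

lemma sphere_cpt {n : ℕ} : IsCompact {x : Fin n → ℝ | x ⬝ᵥ x = 1} := by
  rw [Metric.isCompact_iff_isClosed_bounded]
  constructor
  · have : Continuous fun x : Fin n → ℝ => x ⬝ᵥ x := by
      unfold dotProduct
      exact continuous_finset_sum _ fun i _ => (continuous_apply i).mul (continuous_apply i)
    exact isClosed_eq this continuous_const
  · apply Bornology.IsBounded.subset (Metric.isBounded_closedBall (x := (0 : Fin n → ℝ)) (r := 1))
    intro x hx
    simp only [Metric.mem_closedBall, dist_zero_right]
    rw [pi_norm_le_iff_of_nonneg zero_le_one]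
    intro i
    have h1 : (x i)^2 ≤ 1 := by
      have := Finset.single_le_sum (f := fun j => (x j)^2) (fun j _ => sq_nonneg _)
        (Finset.mem_univ i)
      calc (x i)^2 ≤ ∑ j, (x j)^2 := this
        _ = 1 := by rw [← hx]; simp [dotProduct, sq]
    have h2 : x i * x i ≤ 1 := by rw [← pow_two]; exact h1
    simpa using abs_le_one_iff_mul_self_le_one.2 h2

lemma dot_self_nonneg' {n : ℕ} (y : Fin n → ℝ) : 0 ≤ y ⬝ᵥ y :=
  Finset.sum_nonneg fun i _ => mul_self_nonneg _

lemma dot_self_pos' {n : ℕ} {y : Fin n → ℝ} (hy : y ≠ 0) : 0 < y ⬝ᵥ y := by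
  obtain ⟨i, hi⟩ := Function.ne_iff.1 hy
  have h1 : 0 < y i * y i := mul_self_pos.2 hi
  have h2 : y i * y i ≤ ∑ j, y j * y j :=
    Finset.single_le_sum (f := fun j => y j * y j) (fun j _ => mul_self_nonneg _)
      (Finset.mem_univ i)
  calc (0:ℝ) < y i * y i := h1
    _ ≤ y ⬝ᵥ y := h2

lemma isHermitian_of_isSymm {n : ℕ} {A : Matrix (Fin n) (Fin n) ℝ} (h : A.IsSymm) :
    A.IsHermitian := by
  rw [Matrix.IsHermitian, conjTranspose_eq_transpose_of_trivial]; exact h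

lemma psd_of_unit {n : ℕ} {A : Matrix (Fin n) (Fin n) ℝ} (hA : A.IsSymm)
    (h : ∀ x : Fin n → ℝ, x ⬝ᵥ x = 1 → 0 ≤ x ⬝ᵥ (A *ᵥ x)) : A.PosSemidef := by
  refine PosSemidef.of_dotProduct_mulVec_nonneg (isHermitian_of_isSymm hA) fun y => ?_
  rw [show star y = y from star_trivial y]
  rcases eq_or_ne y 0 with rfl | hy
  · simp
  · have hyy : 0 < y ⬝ᵥ y := dot_self_pos' hy
    set r := Real.sqrt (y ⬝ᵥ y) with hr
    have hrpos : 0 < r := Real.sqrt_pos.2 hyy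
    have hr2 : r * r = y ⬝ᵥ y := Real.mul_self_sqrt (le_of_lt hyy)
    set u := r⁻¹ • y with hu
    have hu1 : u ⬝ᵥ u = 1 := by
      rw [hu, smul_dotProduct, dotProduct_smul, smul_eq_mul, smul_eq_mul, ← hr2]
      field_simp
    have h2 := h u hu1
    have h3 : u ⬝ᵥ (A *ᵥ u) = r⁻¹ * (r⁻¹ * (y ⬝ᵥ (A *ᵥ y))) := by
      rw [hu, smul_dotProduct, mulVec_smul, dotProduct_smul, smul_eq_mul, smul_eq_mul]
    rw [h3] at h2
    nlinarith [h2, mul_pos (inv_pos.2 hrpos) (inv_pos.2 hrpos)]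

lemma core {n : ℕ} (M : ℝ → Matrix (Fin n) (Fin n) ℝ)
    (hM : ∀ i j, Continuous fun t => M t i j)
    (D D' : ℝ → Matrix (Fin n) (Fin n) ℝ)
    (hsymm : ∀ t, (D t).IsSymm)
    (hdiff : ∀ t i j, HasDerivAt (fun s => D s i j) (D' t i j) t)
    (hineq : ∀ t, (D' t - (M t * D t + D t * (M t)ᵀ)).PosSemidef)
    (t₀ : ℝ) (h0 : (D t₀).PosSemidef) :
    ∀ b, t₀ ≤ b → (D b).PosSemidef := by
  intro b hb
  have hDc : ∀ i j, Continuous fun t => D t i j := fun i j =>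
    continuous_iff_continuousAt.2 fun t => (hdiff t i j).continuousAt
  -- bound on entries of M t + (M t)ᵀ on [t₀, b]
  obtain ⟨C, hC⟩ : ∃ C, ∀ t ∈ Icc t₀ b, ‖∑ i, ∑ j, |M t i j + M t j i|‖ ≤ C := by
    apply IsCompact.exists_bound_of_continuousOn isCompact_Icc
    apply Continuous.continuousOn
    exact continuous_finset_sum _ fun i _ => continuous_finset_sum _ fun j _ =>
      ((hM i j).add (hM j i)).abs
  have hentryC : ∀ t ∈ Icc t₀ b, ∀ i j, |(M t + (M t)ᵀ) i j| ≤ C := by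
    intro t ht i j
    have h1 : |M t i j + M t j i| ≤ ∑ i', ∑ j', |M t i' j' + M t j' i'| := by
      calc |M t i j + M t j i| ≤ ∑ j', |M t i j' + M t j' i| :=
            Finset.single_le_sum (f := fun j' => |M t i j' + M t j' i|)
              (fun _ _ => abs_nonneg _) (Finset.mem_univ j)
        _ ≤ ∑ i', ∑ j', |M t i' j' + M t j' i'| :=
            Finset.single_le_sum (f := fun i' => ∑ j', |M t i' j' + M t j' i'|)
              (fun _ _ => Finset.sum_nonneg fun _ _ => abs_nonneg _) (Finset.mem_univ i)
    have h2 := hC t ht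
    rw [Real.norm_eq_abs] at h2
    have h3 : ∑ i', ∑ j', |M t i' j' + M t j' i'| ≤ C := (le_abs_self _).trans h2
    simpa [Matrix.add_apply, Matrix.transpose_apply] using h1.trans h3
  have hC0 : 0 ≤ C := by
    have := hC t₀ ⟨le_refl _, hb⟩
    exact le_trans (norm_nonneg _) this
  set K : ℝ := n * C with hK
  have hKnn : 0 ≤ K := by positivity
  -- the main claim
  have claim : ∀ ε : ℝ, 0 < ε → ∀ t ∈ Icc t₀ b, ∀ x : Fin n → ℝ, x ⬝ᵥ x = 1 →
      0 < x ⬝ᵥ (D t *ᵥ x) + ε * Real.exp ((K + 1) * (t - t₀)) := by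
    intro ε hε
    set K' : ℝ := K + 1 with hK'
    set e : ℝ → ℝ := fun t => Real.exp (K' * (t - t₀)) with he
    have hec : Continuous e := Real.continuous_exp.comp (by fun_prop)
    have hepos : ∀ t, 0 < e t := fun t => Real.exp_pos _
    have hede : ∀ t, HasDerivAt e (K' * e t) t := by
      intro t
      have h1 : HasDerivAt (fun s : ℝ => K' * (s - t₀)) K' t := by
        simpa using ((hasDerivAt_id t).sub_const t₀).const_mul K'
      simpa [he, mul_comm] using h1.exp
    set E : ℝ → Matrix (Fin n) (Fin n) ℝ :=
      fun t => D t + (ε * e t) • (1 : Matrix (Fin n) (Fin n) ℝ) with hE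
    have hqid : ∀ t (x : Fin n → ℝ),
        x ⬝ᵥ (E t *ᵥ x) = x ⬝ᵥ (D t *ᵥ x) + (ε * e t) * (x ⬝ᵥ x) := by
      intro t x
      simp [hE, add_mulVec, smul_mulVec, one_mulVec, dotProduct_add, dotProduct_smul,
        smul_eq_mul]
    suffices hpos : ∀ t ∈ Icc t₀ b, ∀ x : Fin n → ℝ, x ⬝ᵥ x = 1 → 0 < x ⬝ᵥ (E t *ᵥ x) by
      intro t ht x hx
      have H := hpos t ht x hx
      rw [hqid, hx, mul_one] at H
      calc (0:ℝ) < x ⬝ᵥ (D t *ᵥ x) + ε * e t := H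
        _ = x ⬝ᵥ (D t *ᵥ x) + ε * Real.exp ((K + 1) * (t - t₀)) := by rw [he, hK']
    by_contra hcon
    push_neg at hcon
    obtain ⟨ta, hta, xa, hxa1, hxa⟩ := hcon
    haveI : CompactSpace {x : Fin n → ℝ | x ⬝ᵥ x = 1} :=
      isCompact_iff_compactSpace.mp sphere_cpt
    set Cs : Set (ℝ × {x : Fin n → ℝ | x ⬝ᵥ x = 1}) :=
      {p | p.1 ∈ Icc t₀ b ∧ (p.2 : Fin n → ℝ) ⬝ᵥ (E p.1 *ᵥ (p.2 : Fin n → ℝ)) ≤ 0} with hCs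
    have hEc : ∀ i j, Continuous fun t : ℝ => E t i j := by
      intro i j
      simp only [hE, Matrix.add_apply, Matrix.smul_apply, smul_eq_mul]
      exact (hDc i j).add ((continuous_const.mul hec).mul continuous_const)
    have hQcont : Continuous fun p : ℝ × {x : Fin n → ℝ | x ⬝ᵥ x = 1} =>
        (p.2 : Fin n → ℝ) ⬝ᵥ (E p.1 *ᵥ (p.2 : Fin n → ℝ)) := by
      have hx : ∀ i, Continuous fun p : ℝ × {x : Fin n → ℝ | x ⬝ᵥ x = 1} =>
          (p.2 : Fin n → ℝ) i :=
        fun i => (continuous_apply i).comp (continuous_subtype_val.comp continuous_snd)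
      show Continuous fun p : ℝ × {x : Fin n → ℝ | x ⬝ᵥ x = 1} =>
        ∑ i, (p.2 : Fin n → ℝ) i * ∑ j, E p.1 i j * (p.2 : Fin n → ℝ) j
      exact continuous_finset_sum _ fun i _ => (hx i).mul
        (continuous_finset_sum _ fun j _ => ((hEc i j).comp continuous_fst).mul (hx j))
    have hCclosed : IsClosed Cs :=
      (isClosed_Icc.preimage continuous_fst).inter (isClosed_le hQcont continuous_const)
    set s : Set ℝ := Prod.fst '' Cs with hs
    have hsclosed : IsClosed s := isClosedMap_fst_of_compactSpace Cs hCclosed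
    have hssub : s ⊆ Icc t₀ b := by rintro t ⟨p, hp, rfl⟩; exact hp.1
    have hsne : s.Nonempty := ⟨ta, ⟨(ta, ⟨xa, hxa1⟩), ⟨hta, hxa⟩, rfl⟩⟩
    have hbdd : BddBelow s := ⟨t₀, fun t ht => (hssub ht).1⟩
    have ht₁s : sInf s ∈ s := hsclosed.csInf_mem hsne hbdd
    obtain ⟨⟨t₁, ⟨x, hx1⟩⟩, ⟨ht₁Icc, hxle⟩, hfst⟩ := ht₁s
    simp only at ht₁Icc hxle hfst
    have hx1' : x ⬝ᵥ x = 1 := hx1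
    have ht₀pos : ∀ x' : Fin n → ℝ, x' ⬝ᵥ x' = 1 → 0 < x' ⬝ᵥ (E t₀ *ᵥ x') := by
      intro x' hx'
      rw [hqid, hx', mul_one]
      have h1 : 0 ≤ x' ⬝ᵥ (D t₀ *ᵥ x') := by
        have := h0.dotProduct_mulVec_nonneg x'
        rwa [star_trivial] at this
      have h2 : e t₀ = 1 := by simp [he]
      rw [h2]
      nlinarith
    have ht₀lt : t₀ < t₁ := by
      rcases lt_or_eq_of_le ht₁Icc.1 with h | h
      · exact h
      · exfalso
        have := ht₀pos x hx1'
        rw [← h] at hxle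
        linarith
    have hIoo : ∀ t, t₀ ≤ t → t < t₁ → ∀ y : Fin n → ℝ, y ⬝ᵥ y = 1 →
        0 < y ⬝ᵥ (E t *ᵥ y) := by
      intro t h1 h2 y hy
      by_contra hc
      push_neg at hc
      have hts : t ∈ s := ⟨(t, ⟨y, hy⟩), ⟨⟨h1, le_trans (le_of_lt h2) ht₁Icc.2⟩, hc⟩, rfl⟩
      have := csInf_le hbdd hts
      rw [← hfst] at this
      linarith
    have hE₁symm : (E t₁).IsSymm := by
      show (E t₁)ᵀ = E t₁
      rw [hE]
      simp only [transpose_add, transpose_smul, transpose_one]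
      rw [(hsymm t₁ : (D t₁)ᵀ = D t₁)]
    have hE₁psd : (E t₁).PosSemidef := by
      apply psd_of_unit hE₁symm
      intro y hy
      have hcy : Continuous fun t => y ⬝ᵥ (E t *ᵥ y) := by
        show Continuous fun t => ∑ i, y i * ∑ j, E t i j * y j
        exact continuous_finset_sum _ fun i _ => continuous_const.mul
          (continuous_finset_sum _ fun j _ => (hEc i j).mul continuous_const)
      have hev : ∀ᶠ t in nhdsWithin t₁ (Iio t₁), 0 ≤ y ⬝ᵥ (E t *ᵥ y) := by
        filter_upwards [Ioo_mem_nhdsLT_of_mem ⟨ht₀lt, le_refl t₁⟩] with t ht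
        exact le_of_lt (hIoo t (le_of_lt ht.1) ht.2 y hy)
      exact ge_of_tendsto ((hcy.tendsto t₁).mono_left nhdsWithin_le_nhds) hev
    have hq0 : x ⬝ᵥ (E t₁ *ᵥ x) = 0 := by
      refine le_antisymm hxle ?_
      have := hE₁psd.dotProduct_mulVec_nonneg x
      rwa [star_trivial] at this
    have hker : E t₁ *ᵥ x = 0 := by
      apply (hE₁psd.dotProduct_mulVec_zero_iff x).mp
      rwa [star_trivial]
    have hDx : D t₁ *ᵥ x = (-(ε * e t₁)) • x := by
      have h1 : E t₁ *ᵥ x = D t₁ *ᵥ x + (ε * e t₁) • x := by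
        rw [hE]
        simp [add_mulVec, smul_mulVec, one_mulVec]
      rw [h1] at hker
      have := eq_neg_of_add_eq_zero_left hker
      rw [this, neg_smul]
    -- the function g and its derivative
    set g : ℝ → ℝ := fun t => x ⬝ᵥ (D t *ᵥ x) + ε * e t with hg
    have hgq : ∀ t, g t = x ⬝ᵥ (E t *ᵥ x) := by
      intro t
      rw [hqid t x, hx1', mul_one]
    set d : ℝ := x ⬝ᵥ (D' t₁ *ᵥ x) + ε * (K' * e t₁) with hd
    have hgd : HasDerivAt g d t₁ := by
      have hsum : HasDerivAt (fun t => ∑ i, ∑ j, x i * (D t i j * x j))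
          (∑ i, ∑ j, x i * (D' t₁ i j * x j)) t₁ :=
        HasDerivAt.fun_sum fun i _ => HasDerivAt.fun_sum fun j _ =>
          ((hdiff t₁ i j).mul_const (x j)).const_mul (x i)
      have hexp : HasDerivAt (fun t => ε * e t) (ε * (K' * e t₁)) t₁ :=
        (hede t₁).const_mul ε
      have heq2 : x ⬝ᵥ (D' t₁ *ᵥ x) = ∑ i, ∑ j, x i * (D' t₁ i j * x j) := by
        simp [dotProduct, mulVec, Finset.mul_sum]
      have hfun : g = fun t => (∑ i, ∑ j, x i * (D t i j * x j)) + ε * e t := by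
        funext t
        rw [hg]
        simp [dotProduct, mulVec, Finset.mul_sum]
      rw [hfun, hd, heq2]
      exact hsum.add hexp
    -- lower bound for d
    have hw : x ⬝ᵥ ((M t₁ + (M t₁)ᵀ) *ᵥ x) ≤ K := by
      have := quad_bound (M t₁ + (M t₁)ᵀ) x C hC0 (hentryC t₁ ht₁Icc)
      rwa [hx1', mul_one, ← hK] at this
    have hineq1 : x ⬝ᵥ ((M t₁ * D t₁ + D t₁ * (M t₁)ᵀ) *ᵥ x) ≤ x ⬝ᵥ (D' t₁ *ᵥ x) := by
      have h1 := (hineq t₁).dotProduct_mulVec_nonneg x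
      rw [star_trivial, sub_mulVec, dotProduct_sub] at h1
      linarith
    have hMQ : x ⬝ᵥ ((M t₁ * D t₁ + D t₁ * (M t₁)ᵀ) *ᵥ x)
        = -(ε * e t₁) * (x ⬝ᵥ ((M t₁ + (M t₁)ᵀ) *ᵥ x)) := by
      have hvm : x ᵥ* D t₁ = (-(ε * e t₁)) • x := by
        rw [← mulVec_transpose, (hsymm t₁ : (D t₁)ᵀ = D t₁), hDx]
      have A1 : x ⬝ᵥ ((M t₁ * D t₁) *ᵥ x) = -(ε * e t₁) * (x ⬝ᵥ (M t₁ *ᵥ x)) := by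
        rw [← mulVec_mulVec, hDx, mulVec_smul, dotProduct_smul, smul_eq_mul]
      have A2 : x ⬝ᵥ ((D t₁ * (M t₁)ᵀ) *ᵥ x) = -(ε * e t₁) * (x ⬝ᵥ ((M t₁)ᵀ *ᵥ x)) := by
        rw [← mulVec_mulVec, dotProduct_mulVec x (D t₁), hvm, smul_dotProduct, smul_eq_mul]
      rw [add_mulVec, dotProduct_add, A1, A2, add_mulVec, dotProduct_add]
      ring
    have hdpos : 0 < d := by
      have he1 : 0 < ε * e t₁ := mul_pos hε (hepos t₁)
      have h2 : -(ε * e t₁) * (x ⬝ᵥ ((M t₁ + (M t₁)ᵀ) *ᵥ x)) ≥ -(ε * e t₁) * K := by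
        apply mul_le_mul_of_nonpos_left hw
        linarith
      rw [hd, hK']
      nlinarith [hineq1, hMQ]
    -- contradiction via slope
    have hgt₁0 : g t₁ = 0 := by rw [hgq]; exact hq0
    have hslope := hasDerivAt_iff_tendsto_slope.mp hgd
    have hmono : nhdsWithin t₁ (Iio t₁) ≤ nhdsWithin t₁ {t₁}ᶜ :=
      nhdsWithin_mono _ fun y hy => ne_of_lt hy
    have hev1 : ∀ᶠ t in nhdsWithin t₁ (Iio t₁), 0 < slope g t₁ t :=
      (hslope.mono_left hmono).eventually (eventually_gt_nhds hdpos)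
    have hev2 : ∀ᶠ t in nhdsWithin t₁ (Iio t₁), t ∈ Ioo t₀ t₁ :=
      Ioo_mem_nhdsLT_of_mem ⟨ht₀lt, le_refl t₁⟩
    obtain ⟨t₂, hslope2, ht₂⟩ := (hev1.and hev2).exists
    have hgt₂ : 0 < g t₂ := by
      rw [hgq]
      exact hIoo t₂ (le_of_lt ht₂.1) ht₂.2 x hx1'
    rw [slope_def_field, hgt₁0, sub_zero] at hslope2
    rcases div_pos_iff.mp hslope2 with ⟨_, h⟩ | ⟨h, _⟩
    · linarith [ht₂.2]
    · linarith
  -- conclude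
  apply psd_of_unit (hsymm b)
  intro x hx1
  by_contra hneg
  push_neg at hneg
  set a := -(x ⬝ᵥ (D b *ᵥ x)) with ha
  have hapos : 0 < a := by simpa [ha] using hneg
  set ε := a / (2 * Real.exp ((K + 1) * (b - t₀))) with hε
  have hεpos : 0 < ε := by positivity
  have := claim ε hεpos b ⟨hb, le_refl _⟩ x hx1
  rw [hε] at this
  have hexp : 0 < Real.exp ((K + 1) * (b - t₀)) := Real.exp_pos _
  have : 0 < -a + a / (2 * Real.exp ((K + 1) * (b - t₀))) * Real.exp ((K + 1) * (b - t₀)) := by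
    rw [ha] at this ⊢; linarith [this]
  rw [div_mul_eq_mul_div, mul_comm (2:ℝ), ← div_div, mul_div_assoc, div_self (ne_of_gt hexp)] at this
  linarith
lemma psd_smul {n : ℕ} {A : Matrix (Fin n) (Fin n) ℝ} (hA : A.PosSemidef) {c : ℝ}
    (hc : 0 ≤ c) : (c • A).PosSemidef := by
  refine PosSemidef.of_dotProduct_mulVec_nonneg ?_ ?_
  · show (c • A)ᴴ = c • A
    rw [conjTranspose_smul, star_trivial, hA.1]
  · intro x
    rw [smul_mulVec, dotProduct_smul, smul_eq_mul]
    exact mul_nonneg hc (hA.dotProduct_mulVec_nonneg x)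


theorem stmt_19 (n m : ℕ) (T : ℝ) (hT : 0 < T)
    (A : ℝ → Matrix (Fin n) (Fin n) ℝ)
    (B : ℝ → Matrix (Fin n) (Fin m) ℝ) (α : ℝ → ℝ)
    (hAcont : ∀ i j, Continuous fun t => A t i j)
    (hBcont : ∀ i j, Continuous fun t => B t i j)
    (hαcont : Continuous α) (hαpos : ∀ t, 0 < α t)
    (hAper : ∀ t, A (t + T) = A t) (hBper : ∀ t, B (t + T) = B t)
    (hαper : ∀ t, α (t + T) = α t)
    (P P' : ℝ → Matrix (Fin n) (Fin n) ℝ)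
    (hPsymm : ∀ t, (P t).IsSymm) (hPper : ∀ t, P (t + T) = P t)
    (hPdiff : ∀ t i j, HasDerivAt (fun s => P s i j) (P' t i j) t)
    (hP'cont : ∀ i j, Continuous fun t => P' t i j)
    (hPeq : ∀ t, P' t = A t * P t + P t * (A t)ᵀ + α t • P t + (α t)⁻¹ • (B t * (B t)ᵀ))
    (t₀ : ℝ) :
    ((P t₀).PosSemidef → ∀ t, (P t).PosSemidef) ∧
    ∀ Ptil Ptil' : ℝ → Matrix (Fin n) (Fin n) ℝ,
      (∀ t, (Ptil t).IsSymm) → (∀ t, Ptil (t + T) = Ptil t) →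
      (∀ t i j, HasDerivAt (fun s => Ptil s i j) (Ptil' t i j) t) →
      (∀ i j, Continuous fun t => Ptil' t i j) →
      (∀ t, (Ptil' t -
        (A t * Ptil t + Ptil t * (A t)ᵀ + α t • Ptil t + (α t)⁻¹ • (B t * (B t)ᵀ))).PosSemidef) →
      (Ptil t₀ - P t₀).PosSemidef →
      ∀ t ≥ t₀, (Ptil t - P t).PosSemidef := by
  set Mf : ℝ → Matrix (Fin n) (Fin n) ℝ := fun t => A t + (α t / 2) • 1 with hMf
  have hMcont : ∀ i j, Continuous fun t => Mf t i j := by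
    intro i j
    simp only [hMf, Matrix.add_apply, Matrix.smul_apply, smul_eq_mul]
    exact (hAcont i j).add ((hαcont.div_const 2).mul continuous_const)
  have hMkey : ∀ t (X : Matrix (Fin n) (Fin n) ℝ),
      Mf t * X + X * (Mf t)ᵀ = A t * X + X * (A t)ᵀ + α t • X := by
    intro t X
    rw [hMf]
    simp only [transpose_add, transpose_smul, transpose_one, Matrix.add_mul, Matrix.mul_add,
      Matrix.smul_mul, Matrix.mul_smul, Matrix.one_mul, Matrix.mul_one]
    have : (α t / 2) • X + (α t / 2) • X = α t • X := by
      rw [← add_smul]; norm_num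
    rw [← this]
    abel
  have hBpsd : ∀ t, ((α t)⁻¹ • (B t * (B t)ᵀ)).PosSemidef := by
    intro t
    have h1 : (B t * (B t)ᵀ).PosSemidef := by
      have := posSemidef_self_mul_conjTranspose (B t)
      rwa [conjTranspose_eq_transpose_of_trivial] at this
    exact psd_smul h1 (le_of_lt (inv_pos.2 (hαpos t)))
  have hPineq : ∀ t, (P' t - (Mf t * P t + P t * (Mf t)ᵀ)).PosSemidef := by
    intro t
    have heq : P' t - (Mf t * P t + P t * (Mf t)ᵀ) = (α t)⁻¹ • (B t * (B t)ᵀ) := by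
      rw [hMkey t (P t), hPeq t]
      abel
    rw [heq]
    exact hBpsd t
  constructor
  · intro h0
    have fwd : ∀ t, t₀ ≤ t → (P t).PosSemidef := fun t ht =>
      core Mf hMcont P P' hPsymm hPdiff hPineq t₀ h0 t ht
    have hper : ∀ (k : ℕ) (t : ℝ), P (t + k * T) = P t := by
      intro k
      induction k with
      | zero => intro t; norm_num
      | succ k ih =>
        intro t
        have h1 : t + ((k : ℝ) + 1) * T = (t + k * T) + T := by ring
        push_cast
        rw [h1, hPper, ih]
    intro t
    obtain ⟨k, hk⟩ := exists_nat_ge ((t₀ - t) / T)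
    have hkT : t₀ ≤ t + k * T := by
      have := (div_le_iff₀ hT).mp hk
      linarith
    rw [← hper k t]
    exact fwd _ hkT
  · intro Ptil Ptil' h1 h2 h3 h4 h5 h6
    intro t ht
    apply core Mf hMcont (fun s => Ptil s - P s) (fun s => Ptil' s - P' s)
      (fun s => (h1 s).sub (hPsymm s))
      (fun s i j => by simpa [Matrix.sub_apply] using (h3 s i j).fun_sub (hPdiff s i j))
      ?_ t₀ h6 t ht
    intro s
    have heq : (Ptil' s - P' s) - (Mf s * (Ptil s - P s) + (Ptil s - P s) * (Mf s)ᵀ)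
        = Ptil' s - (A s * Ptil s + Ptil s * (A s)ᵀ + α s • Ptil s
            + (α s)⁻¹ • (B s * (B s)ᵀ)) := by
      rw [hMkey s (Ptil s - P s), hPeq s]
      simp only [Matrix.mul_sub, Matrix.sub_mul, smul_sub]
      abel
    rw [heq]
    exact h5 s
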